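/- For every n ≥ 2, the variance of the prefix exchange distance of a uniformly random permutation of Sₙ equals Hₙ + 4/n − 8/n² − Σ_{j=1}^{n} 1/j²; equivalently, (1/n!)·Σ_{π ∈ Sₙ} pexc(π)² − ((1/n!)·Σ_{π ∈ Sₙ} pexc(π))² = Hₙ + 4/n − 8/n² − Σ_{j=1}^{n} 1/j². -/

import Mathlib

open Equiv Finset Filter
open scoped Classical

noncomputable section

/-- Number of fixed points of a permutation. -/
def c1 {n : ℕ} (π : Equiv.Perm (Fin n)) : ℕ :=
  (Finset.univ.filter fun i => π i = i).card

/-- Number of cycles of length at least 2 of a permutation. -/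
def c2 {n : ℕ} (π : Equiv.Perm (Fin n)) : ℕ := π.cycleType.card

/-- The prefix exchange distance, given by the Akers–Krishnamurthy formula. -/
def pexc {n : ℕ} (π : Equiv.Perm (Fin n)) : ℕ :=
  n + c2 π - c1 π - (if ∀ i : Fin n, (i : ℕ) = 0 → π i = i then 0 else 2)

/-- Whitney numbers of the second kind for the star poset. -/
def W (n k : ℕ) : ℕ :=
  (Finset.univ.filter fun π : Equiv.Perm (Fin n) => pexc π = k).card

/-- The `n`-th harmonic number. -/
def H (n : ℕ) : ℝ := ∑ k ∈ Finset.Icc 1 n, (1 : ℝ) / k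

namespace PexcAux

/-! ### Auxiliary development -/

/-- real-valued fixed point count, as a sum of indicators -/
def c1r {n : ℕ} (π : Equiv.Perm (Fin n)) : ℝ :=
  ∑ i : Fin n, if π i = i then (1 : ℝ) else 0

/-- `c2 - c1` as a real number -/
def k2r {n : ℕ} (π : Equiv.Perm (Fin n)) : ℝ := (c2 π : ℝ) - c1r π

def SC (n : ℕ) : ℝ := ∑ π : Equiv.Perm (Fin n), c1r π
def SC2 (n : ℕ) : ℝ := ∑ π : Equiv.Perm (Fin n), (c1r π) ^ 2
def SK (n : ℕ) : ℝ := ∑ π : Equiv.Perm (Fin n), k2r π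
def SK2 (n : ℕ) : ℝ := ∑ π : Equiv.Perm (Fin n), (k2r π) ^ 2
def SP (n : ℕ) : ℝ := ∑ π : Equiv.Perm (Fin n), c1r π * k2r π
def T (n : ℕ) : ℝ := ∑ j ∈ Finset.Icc 1 n, 1 / (j : ℝ) ^ 2

lemma c1r_eq {n : ℕ} (π : Equiv.Perm (Fin n)) : c1r π = (c1 π : ℝ) := by
  rw [c1, c1r]
  rw [Finset.sum_boole]

/-! ### The cycle-structure lemmas -/

lemma isCycle_swap_mul_of_fixed {α : Type*} [Fintype α] [DecidableEq α] {c : Equiv.Perm α}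
    (hc : c.IsCycle) {x y : α} (hxy : x ≠ y) (hcx : c x = x) (hcy : c y ≠ y) :
    Equiv.Perm.IsCycle (Equiv.swap x y * c) := by
  set d := Equiv.swap x y * c with hd
  have hpowx : ∀ k : ℕ, (c ^ k) x = x := fun k =>
    Function.IsFixedPt.perm_pow hcx k
  have hpowy : ∀ k : ℕ, (c ^ k) y ≠ x := by
    intro k h
    have h2 : (c ^ k) y = (c ^ k) x := by rw [h, hpowx k]
    exact hxy ((c ^ k).injective h2).symm
  have hdx : d x = y := by
    rw [hd, Equiv.Perm.mul_apply, hcx, Equiv.swap_apply_left]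
  have claim : ∀ k : ℕ, d.SameCycle x ((c ^ k) y) := by
    intro k
    induction k with
    | zero => simpa using ⟨(1 : ℤ), by simpa using hdx⟩
    | succ k ih =>
      have hsucc : (c ^ (k + 1)) y = c ((c ^ k) y) := by
        rw [pow_succ', Equiv.Perm.mul_apply]
      by_cases hzy : c ((c ^ k) y) = y
      · rw [hsucc, hzy]; exact ⟨(1 : ℤ), by simpa using hdx⟩
      · have hne : c ((c ^ k) y) ≠ x := by
          rw [← hsucc]; exact hpowy (k + 1)
        have hstep : d ((c ^ k) y) = c ((c ^ k) y) := by
          rw [hd, Equiv.Perm.mul_apply, Equiv.swap_apply_of_ne_of_ne hne hzy]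
        rw [hsucc, ← hstep]
        exact Equiv.Perm.sameCycle_apply_right.2 ih
  refine ⟨x, by rw [hdx]; exact hxy.symm, ?_⟩
  intro b hb
  by_cases hbx : b = x
  · subst hbx; exact Equiv.Perm.SameCycle.refl d b
  · have hcb : c b ≠ b := by
      intro h
      apply hb
      have hby : b ≠ y := by rintro rfl; exact hcy h
      rw [hd, Equiv.Perm.mul_apply, h, Equiv.swap_apply_of_ne_of_ne hbx hby]
    obtain ⟨k, hk⟩ := hc.exists_pow_eq hcy hcb
    rw [← hk]
    exact claim k

lemma card_cycleType_swap_mul {α : Type*} [Fintype α] [DecidableEq α] (f : Equiv.Perm α)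
    (x y : α) (hxy : x ≠ y) (hfx : f x = x) (hfy : f y ≠ y) :
    Multiset.card (Equiv.swap x y * f).cycleType = Multiset.card f.cycleType := by
  classical
  set c := f.cycleOf y with hcdef
  have hcy : c y ≠ y := by rw [hcdef, Equiv.Perm.cycleOf_apply_self]; exact hfy
  have hcyc : c.IsCycle := Equiv.Perm.isCycle_cycleOf f hfy
  have hcx : c x = x := by
    by_contra h
    have hx : x ∈ c.support := Equiv.Perm.mem_support.2 h
    exact (Equiv.Perm.mem_support.1 (Equiv.Perm.support_cycleOf_le f y hx)) hfx
  set g := c⁻¹ * f with hgdef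
  have hfg : f = c * g := by rw [hgdef]; group
  have hdisj : c.Disjoint g := by
    intro z
    by_cases hz : c z = z
    · exact Or.inl hz
    · right
      have hs : f.SameCycle y z := by
        rw [hcdef, Equiv.Perm.cycleOf_apply] at hz
        by_contra hns
        rw [if_neg hns] at hz
        exact hz rfl
      have hcz : c z = f z := by rw [hcdef, Equiv.Perm.cycleOf_apply, if_pos hs]
      show (c⁻¹ * f) z = z
      rw [Equiv.Perm.mul_apply, ← hcz, Equiv.Perm.coe_inv, Equiv.symm_apply_apply]
  have hgx : g x = x := by
    rw [hgdef, Equiv.Perm.mul_apply, hfx]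
    exact c.injective (by rw [Equiv.Perm.coe_inv, Equiv.apply_symm_apply, hcx])
  have hgy : g y = y := by
    rw [hgdef, Equiv.Perm.mul_apply]
    have : c y = f y := Equiv.Perm.cycleOf_apply_self f y
    rw [← this, Equiv.Perm.coe_inv, Equiv.symm_apply_apply]
  set d := Equiv.swap x y * c with hddef
  have hd : d.IsCycle := isCycle_swap_mul_of_fixed hcyc hxy hcx hcy
  have hDdg : d.Disjoint g := by
    intro z
    by_cases hgz : g z = z
    · exact Or.inr hgz
    · left
      have hcz : c z = z := (hdisj z).resolve_right hgz
      have hzx : z ≠ x := fun h => hgz (by rw [h, hgx])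
      have hzy : z ≠ y := fun h => hgz (by rw [h, hgy])
      show (Equiv.swap x y * c) z = z
      rw [Equiv.Perm.mul_apply, hcz, Equiv.swap_apply_of_ne_of_ne hzx hzy]
  have heq : Equiv.swap x y * f = d * g := by
    rw [hfg, hddef]; group
  rw [heq, Equiv.Perm.Disjoint.cycleType_mul hDdg]
  conv_rhs => rw [hfg, Equiv.Perm.Disjoint.cycleType_mul hdisj]
  simp [hd.cycleType, hcyc.cycleType]

/-! ### Structure of `decomposeFin.symm` -/

lemma hat_zero {n : ℕ} (e : Equiv.Perm (Fin n)) :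
    Equiv.Perm.decomposeFin.symm ((0 : Fin (n+1)), e) 0 = 0 :=
  Equiv.Perm.decomposeFin_symm_apply_zero 0 e

lemma hat_succ {n : ℕ} (e : Equiv.Perm (Fin n)) (x : Fin n) :
    Equiv.Perm.decomposeFin.symm ((0 : Fin (n+1)), e) x.succ = (e x).succ := by
  rw [Equiv.Perm.decomposeFin_symm_apply_succ, Equiv.swap_self]
  rfl

lemma decomp_eq {n : ℕ} (p : Fin (n+1)) (e : Equiv.Perm (Fin n)) :
    Equiv.Perm.decomposeFin.symm (p, e)
      = Equiv.swap 0 p * Equiv.Perm.decomposeFin.symm ((0 : Fin (n+1)), e) := by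
  ext i
  refine Fin.cases ?_ ?_ i
  · simp [Equiv.Perm.decomposeFin_symm_apply_zero, hat_zero]
  · intro x
    simp [Equiv.Perm.decomposeFin_symm_apply_succ, hat_succ]

def finSuccEquivNe (n : ℕ) : Fin n ≃ {i : Fin (n+1) // i ≠ 0} where
  toFun i := ⟨i.succ, Fin.succ_ne_zero i⟩
  invFun j := j.1.pred j.2
  left_inv i := by simp
  right_inv j := by simp

lemma hat_eq_extend {n : ℕ} (e : Equiv.Perm (Fin n)) :
    Equiv.Perm.decomposeFin.symm ((0 : Fin (n+1)), e)
      = e.extendDomain (finSuccEquivNe n) := by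
  ext i
  refine Fin.cases ?_ ?_ i
  · rw [Equiv.Perm.decomposeFin_symm_apply_zero,
      Equiv.Perm.extendDomain_apply_not_subtype _ _ (by simp)]
  · intro x
    rw [hat_succ]
    have h1 : (x.succ : Fin (n+1)) = ((finSuccEquivNe n) x : Fin (n+1)) := rfl
    rw [h1, Equiv.Perm.extendDomain_apply_image]
    rfl

lemma c2_hat {n : ℕ} (e : Equiv.Perm (Fin n)) :
    c2 (Equiv.Perm.decomposeFin.symm ((0 : Fin (n+1)), e)) = c2 e := by
  rw [c2, c2, hat_eq_extend, Equiv.Perm.cycleType_extendDomain]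

lemma c2_succ {n : ℕ} (q : Fin n) (e : Equiv.Perm (Fin n)) :
    c2 (Equiv.Perm.decomposeFin.symm (q.succ, e)) = c2 e + (if e q = q then 1 else 0) := by
  rw [decomp_eq]
  set eh := Equiv.Perm.decomposeFin.symm ((0 : Fin (n+1)), e) with heh
  have hh0 : eh 0 = 0 := Equiv.Perm.decomposeFin_symm_apply_zero 0 e
  have hhs : ∀ x : Fin n, eh x.succ = (e x).succ := hat_succ e
  have h0q : (0 : Fin (n+1)) ≠ q.succ := (Fin.succ_ne_zero q).symm
  by_cases h : e q = q
  · have hfix : eh q.succ = q.succ := by rw [hhs q, h]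
    have hdisj : (Equiv.swap (0 : Fin (n+1)) q.succ).Disjoint eh := by
      intro z
      by_cases hz0 : z = 0
      · exact Or.inr (by rw [hz0, hh0])
      · by_cases hzq : z = q.succ
        · exact Or.inr (by rw [hzq, hfix])
        · exact Or.inl (Equiv.swap_apply_of_ne_of_ne hz0 hzq)
    rw [if_pos h, c2, Equiv.Perm.Disjoint.cycleType_mul hdisj, c2, Multiset.card_add,
      (Equiv.Perm.isCycle_swap h0q).cycleType]
    have : Multiset.card eh.cycleType = Multiset.card e.cycleType := c2_hat e
    simp [this, add_comm]
  · have hne : eh q.succ ≠ q.succ := by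
      rw [hhs q]; exact fun hc => h (Fin.succ_injective n hc)
    rw [if_neg h, c2, c2, add_zero]
    have h2 : Multiset.card eh.cycleType = Multiset.card e.cycleType := c2_hat e
    rw [← h2]
    exact card_cycleType_swap_mul eh 0 q.succ h0q hh0 hne

lemma c1r_zero' {n : ℕ} (e : Equiv.Perm (Fin n)) :
    c1r (Equiv.Perm.decomposeFin.symm ((0 : Fin (n+1)), e)) = c1r e + 1 := by
  rw [c1r, Fin.sum_univ_succ, Equiv.Perm.decomposeFin_symm_apply_zero, if_pos rfl]
  have hpt : ∀ x : Fin n,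
      (if Equiv.Perm.decomposeFin.symm ((0 : Fin (n+1)), e) x.succ = x.succ then (1:ℝ) else 0)
        = (if e x = x then (1:ℝ) else 0) := by
    intro x
    rw [hat_succ]
    by_cases hx : e x = x
    · rw [if_pos (by rw [hx]), if_pos hx]
    · rw [if_neg (fun hc => hx (Fin.succ_injective n hc)), if_neg hx]
  rw [Finset.sum_congr rfl (fun x _ => hpt x), c1r]
  ring

lemma c1r_succ' {n : ℕ} (q : Fin n) (e : Equiv.Perm (Fin n)) :
    c1r (Equiv.Perm.decomposeFin.symm (q.succ, e))
      = c1r e - (if e q = q then (1:ℝ) else 0) := by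
  rw [c1r, Fin.sum_univ_succ, Equiv.Perm.decomposeFin_symm_apply_zero,
    if_neg (Fin.succ_ne_zero q), zero_add]
  have hpt : ∀ x : Fin n,
      (if Equiv.Perm.decomposeFin.symm (q.succ, e) x.succ = x.succ then (1:ℝ) else 0)
        = (if e x = x then (1:ℝ) else 0) - (if x = q then (if e x = x then (1:ℝ) else 0) else 0) := by
    intro x
    rw [Equiv.Perm.decomposeFin_symm_apply_succ]
    by_cases hq : e x = q
    · by_cases hx : e x = x
      · have hxq : x = q := by rw [← hx, hq]
        rw [hq, Equiv.swap_apply_right, if_neg (Ne.symm (Fin.succ_ne_zero x))]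
        simp [hxq]
      · have hxq : x ≠ q := by rintro rfl; exact hx hq
        rw [hq, Equiv.swap_apply_right, if_neg (Ne.symm (Fin.succ_ne_zero x))]
        simp [hxq, Ne.symm hxq]
    · have h1 : (e x).succ ≠ 0 := Fin.succ_ne_zero _
      have h2 : (e x).succ ≠ q.succ := fun hc => hq (Fin.succ_injective n hc)
      rw [Equiv.swap_apply_of_ne_of_ne h1 h2]
      by_cases hx : e x = x
      · have hxq : x ≠ q := by rintro rfl; exact hq hx
        rw [if_pos (by rw [hx]), if_pos hx, if_neg hxq]
        ring
      · rw [if_neg (fun hc => hx (Fin.succ_injective n hc)), if_neg hx]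
        simp
  rw [Finset.sum_congr rfl (fun x _ => hpt x), Finset.sum_sub_distrib]
  congr 1
  rw [Finset.sum_ite_eq' Finset.univ q (fun x => if e x = x then (1:ℝ) else 0)]
  simp

lemma k2r_zero' {n : ℕ} (e : Equiv.Perm (Fin n)) :
    k2r (Equiv.Perm.decomposeFin.symm ((0 : Fin (n+1)), e)) = k2r e - 1 := by
  rw [k2r, c2_hat, c1r_zero', k2r]; ring

lemma k2r_succ' {n : ℕ} (q : Fin n) (e : Equiv.Perm (Fin n)) :
    k2r (Equiv.Perm.decomposeFin.symm (q.succ, e))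
      = k2r e + 2 * (if e q = q then (1:ℝ) else 0) := by
  rw [k2r, c2_succ, c1r_succ', k2r]
  push_cast
  by_cases h : e q = q <;> simp [h] <;> ring

/-! ### Casting pexc to the reals -/

lemma pexc_cast {n : ℕ} (π : Equiv.Perm (Fin (n+1))) :
    (pexc π : ℝ) = ((n : ℝ) + 1) + (c2 π : ℝ) - c1r π - (if π 0 = 0 then 0 else 2) := by
  have hind : (∀ i : Fin (n+1), (i : ℕ) = 0 → π i = i) ↔ π 0 = 0 := by
    constructor
    · intro h; exact h 0 rfl
    · intro h i hi
      have h2 : i = 0 := Fin.ext (by simpa using hi)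
      rw [h2]; exact h
  have hc1 : c1 π ≤ n + 1 := le_trans (Finset.card_filter_le _ _) (by simp)
  rw [c1r_eq]
  by_cases h : π 0 = 0
  · have key : pexc π + c1 π = n + 1 + c2 π := by
      rw [pexc, if_pos (hind.mpr h)]
      omega
    have key' := congrArg (fun m : ℕ => (m : ℝ)) key
    push_cast at key'
    rw [if_pos h]
    linarith
  · have hmem : π⁻¹ 0 ∈ Finset.univ.erase (0 : Fin (n+1)) := by
      apply Finset.mem_erase.2
      refine ⟨?_, Finset.mem_univ _⟩
      intro hc
      apply h
      have := congrArg π hc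
      rw [Equiv.Perm.coe_inv, Equiv.apply_symm_apply] at this
      exact this.symm
    have hn1 : 1 ≤ n := by
      have hcard : (Finset.univ.erase (0 : Fin (n+1))).card = n := by
        rw [Finset.card_erase_of_mem (Finset.mem_univ _)]
        simp
      have := Finset.card_pos.2 ⟨_, hmem⟩
      omega
    have hsub : (Finset.univ.filter fun i => π i = i)
        ⊆ (Finset.univ.erase (0 : Fin (n+1))).erase (π⁻¹ 0) := by
      intro i hi
      have hfix := (Finset.mem_filter.1 hi).2
      apply Finset.mem_erase.2
      constructor
      · intro hc
        apply h
        have h2 : π i = 0 := by rw [hc, Equiv.Perm.coe_inv, Equiv.apply_symm_apply]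
        have h3 : i = 0 := by rw [← hfix, h2]
        rw [← h3, hfix, h3]
      · apply Finset.mem_erase.2
        refine ⟨?_, Finset.mem_univ _⟩
        intro hc
        rw [hc] at hfix
        exact h hfix
    have hcard : c1 π + 2 ≤ n + 1 := by
      have h2 := Finset.card_le_card hsub
      rw [Finset.card_erase_of_mem hmem, Finset.card_erase_of_mem (Finset.mem_univ _)] at h2
      simp only [Finset.card_univ, Fintype.card_fin] at h2
      rw [c1]
      omega
    have hc2 : 1 ≤ c2 π := by
      have hne : π ≠ 1 := fun hc => h (by rw [hc]; rfl)
      exact Equiv.Perm.card_cycleType_pos.2 hne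
    have key : pexc π + c1 π + 2 = n + 1 + c2 π := by
      rw [pexc, if_neg (fun hc => h (hind.mp hc))]
      omega
    have key' := congrArg (fun m : ℕ => (m : ℝ)) key
    push_cast at key'
    rw [if_neg h]
    linarith

/-! ### Summation machinery -/

lemma sum_perm_succ {n : ℕ} (f : Equiv.Perm (Fin (n+1)) → ℝ) :
    (∑ π : Equiv.Perm (Fin (n+1)), f π)
      = (∑ e : Equiv.Perm (Fin n), f (Equiv.Perm.decomposeFin.symm (0, e)))
        + ∑ e : Equiv.Perm (Fin n), ∑ q : Fin n,
            f (Equiv.Perm.decomposeFin.symm (q.succ, e)) := by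
  rw [← Equiv.sum_comp (Equiv.Perm.decomposeFin (n := n)).symm f, Fintype.sum_prod_type,
    Fin.sum_univ_succ]
  rw [Finset.sum_comm]

lemma sum_ind {n : ℕ} (e : Equiv.Perm (Fin n)) (a b : ℝ) :
    (∑ q : Fin n, (a + b * (if e q = q then (1:ℝ) else 0))) = n * a + b * c1r e := by
  rw [Finset.sum_add_distrib, Finset.sum_const, ← Finset.mul_sum, c1r]
  simp [mul_comm]

/-! ### Recursions -/


lemma moment_sum (n : ℕ) (a b c d f g : ℝ) :
    (∑ π : Equiv.Perm (Fin n), (a * (k2r π)^2 + b * (c1r π * k2r π) + c * (c1r π)^2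
        + d * c1r π + f * k2r π + g))
      = a * SK2 n + b * SP n + c * SC2 n + d * SC n + f * SK n
        + g * (Nat.factorial n : ℝ) := by
  rw [Finset.sum_add_distrib, Finset.sum_add_distrib, Finset.sum_add_distrib,
    Finset.sum_add_distrib, Finset.sum_add_distrib, ← Finset.mul_sum, ← Finset.mul_sum,
    ← Finset.mul_sum, ← Finset.mul_sum, ← Finset.mul_sum, Finset.sum_const, Finset.card_univ,
    Fintype.card_perm, Fintype.card_fin, SK2, SP, SC2, SC, SK, nsmul_eq_mul]
  ring

lemma SC_rec (n : ℕ) : SC (n+1) = (n : ℝ) * SC n + (Nat.factorial n : ℝ) := by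
  rw [SC, sum_perm_succ]
  have inner : ∀ e : Equiv.Perm (Fin n),
      (∑ q : Fin n, c1r (Equiv.Perm.decomposeFin.symm (q.succ, e))) = (n:ℝ) * c1r e + (-1) * c1r e := by
    intro e
    have hq : ∀ q : Fin n, c1r (Equiv.Perm.decomposeFin.symm (q.succ, e))
        = c1r e + (-1) * (if e q = q then (1:ℝ) else 0) := by
      intro q
      rw [c1r_succ']
      try (by_cases h : e q = q <;> simp [h] <;> ring)
    rw [Finset.sum_congr rfl fun q _ => hq q, sum_ind]
  rw [Finset.sum_congr rfl fun e _ => inner e]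
  rw [← Finset.sum_add_distrib]
  have expand : ∀ e : Equiv.Perm (Fin n), c1r (Equiv.Perm.decomposeFin.symm ((0 : Fin (n+1)), e)) + ((n:ℝ) * c1r e + (-1) * c1r e)
      = 0 * (k2r e)^2 + 0 * (c1r e * k2r e) + 0 * (c1r e)^2 + (n:ℝ) * c1r e + 0 * k2r e + 1 := by
    intro e
    rw [c1r_zero']
    ring
  rw [Finset.sum_congr rfl fun e _ => expand e, moment_sum]
  ring

lemma SC2_rec (n : ℕ) : SC2 (n+1) = ((n : ℝ) - 1) * SC2 n + 3 * SC n + (Nat.factorial n : ℝ) := by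
  rw [SC2, sum_perm_succ]
  have inner : ∀ e : Equiv.Perm (Fin n),
      (∑ q : Fin n, (c1r (Equiv.Perm.decomposeFin.symm (q.succ, e)))^2) = (n:ℝ) * (c1r e)^2 + (1 - 2 * c1r e) * c1r e := by
    intro e
    have hq : ∀ q : Fin n, (c1r (Equiv.Perm.decomposeFin.symm (q.succ, e)))^2
        = (c1r e)^2 + (1 - 2 * c1r e) * (if e q = q then (1:ℝ) else 0) := by
      intro q
      rw [c1r_succ']
      try (by_cases h : e q = q <;> simp [h] <;> ring)
    rw [Finset.sum_congr rfl fun q _ => hq q, sum_ind]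
  rw [Finset.sum_congr rfl fun e _ => inner e]
  rw [← Finset.sum_add_distrib]
  have expand : ∀ e : Equiv.Perm (Fin n), (c1r (Equiv.Perm.decomposeFin.symm ((0 : Fin (n+1)), e)))^2 + ((n:ℝ) * (c1r e)^2 + (1 - 2 * c1r e) * c1r e)
      = 0 * (k2r e)^2 + 0 * (c1r e * k2r e) + ((n:ℝ) - 1) * (c1r e)^2 + 3 * c1r e + 0 * k2r e + 1 := by
    intro e
    rw [c1r_zero']
    ring
  rw [Finset.sum_congr rfl fun e _ => expand e, moment_sum]
  ring

lemma SK_rec (n : ℕ) : SK (n+1) = ((n : ℝ) + 1) * SK n + 2 * SC n - (Nat.factorial n : ℝ) := by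
  rw [SK, sum_perm_succ]
  have inner : ∀ e : Equiv.Perm (Fin n),
      (∑ q : Fin n, k2r (Equiv.Perm.decomposeFin.symm (q.succ, e))) = (n:ℝ) * k2r e + 2 * c1r e := by
    intro e
    have hq : ∀ q : Fin n, k2r (Equiv.Perm.decomposeFin.symm (q.succ, e))
        = k2r e + 2 * (if e q = q then (1:ℝ) else 0) := by
      intro q
      rw [k2r_succ']
      try (by_cases h : e q = q <;> simp [h] <;> ring)
    rw [Finset.sum_congr rfl fun q _ => hq q, sum_ind]
  rw [Finset.sum_congr rfl fun e _ => inner e]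
  rw [← Finset.sum_add_distrib]
  have expand : ∀ e : Equiv.Perm (Fin n), k2r (Equiv.Perm.decomposeFin.symm ((0 : Fin (n+1)), e)) + ((n:ℝ) * k2r e + 2 * c1r e)
      = 0 * (k2r e)^2 + 0 * (c1r e * k2r e) + 0 * (c1r e)^2 + 2 * c1r e + ((n:ℝ) + 1) * k2r e + (-1) := by
    intro e
    rw [k2r_zero']
    ring
  rw [Finset.sum_congr rfl fun e _ => expand e, moment_sum]
  ring

lemma SP_rec (n : ℕ) :
    SP (n+1) = (n : ℝ) * SP n + SK n + 2 * SC2 n - 3 * SC n - (Nat.factorial n : ℝ) := by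
  rw [SP, sum_perm_succ]
  have inner : ∀ e : Equiv.Perm (Fin n),
      (∑ q : Fin n, c1r (Equiv.Perm.decomposeFin.symm (q.succ, e)) * k2r (Equiv.Perm.decomposeFin.symm (q.succ, e))) = (n:ℝ) * (c1r e * k2r e) + (2 * c1r e - k2r e - 2) * c1r e := by
    intro e
    have hq : ∀ q : Fin n, c1r (Equiv.Perm.decomposeFin.symm (q.succ, e)) * k2r (Equiv.Perm.decomposeFin.symm (q.succ, e))
        = c1r e * k2r e + (2 * c1r e - k2r e - 2) * (if e q = q then (1:ℝ) else 0) := by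
      intro q
      rw [c1r_succ', k2r_succ']
      try (by_cases h : e q = q <;> simp [h] <;> ring)
    rw [Finset.sum_congr rfl fun q _ => hq q, sum_ind]
  rw [Finset.sum_congr rfl fun e _ => inner e]
  rw [← Finset.sum_add_distrib]
  have expand : ∀ e : Equiv.Perm (Fin n), c1r (Equiv.Perm.decomposeFin.symm ((0 : Fin (n+1)), e)) * k2r (Equiv.Perm.decomposeFin.symm ((0 : Fin (n+1)), e)) + ((n:ℝ) * (c1r e * k2r e) + (2 * c1r e - k2r e - 2) * c1r e)
      = 0 * (k2r e)^2 + (n:ℝ) * (c1r e * k2r e) + 2 * (c1r e)^2 + (-3) * c1r e + 1 * k2r e + (-1) := by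
    intro e
    rw [c1r_zero', k2r_zero']
    ring
  rw [Finset.sum_congr rfl fun e _ => expand e, moment_sum]
  ring

lemma SK2_rec (n : ℕ) :
    SK2 (n+1) = ((n : ℝ) + 1) * SK2 n + 4 * SP n + 4 * SC n - 2 * SK n
      + (Nat.factorial n : ℝ) := by
  rw [SK2, sum_perm_succ]
  have inner : ∀ e : Equiv.Perm (Fin n),
      (∑ q : Fin n, (k2r (Equiv.Perm.decomposeFin.symm (q.succ, e)))^2) = (n:ℝ) * (k2r e)^2 + (4 * k2r e + 4) * c1r e := by
    intro e
    have hq : ∀ q : Fin n, (k2r (Equiv.Perm.decomposeFin.symm (q.succ, e)))^2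
        = (k2r e)^2 + (4 * k2r e + 4) * (if e q = q then (1:ℝ) else 0) := by
      intro q
      rw [k2r_succ']
      try (by_cases h : e q = q <;> simp [h] <;> ring)
    rw [Finset.sum_congr rfl fun q _ => hq q, sum_ind]
  rw [Finset.sum_congr rfl fun e _ => inner e]
  rw [← Finset.sum_add_distrib]
  have expand : ∀ e : Equiv.Perm (Fin n), (k2r (Equiv.Perm.decomposeFin.symm ((0 : Fin (n+1)), e)))^2 + ((n:ℝ) * (k2r e)^2 + (4 * k2r e + 4) * c1r e)
      = ((n:ℝ) + 1) * (k2r e)^2 + 4 * (c1r e * k2r e) + 0 * (c1r e)^2 + 4 * c1r e + (-2) * k2r e + 1 := by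
    intro e
    rw [k2r_zero']
    ring
  rw [Finset.sum_congr rfl fun e _ => expand e, moment_sum]
  ring

/-! ### Sum of pexc and pexc² -/

lemma sumA (n : ℕ) :
    (∑ π : Equiv.Perm (Fin (n+1)), (pexc π : ℝ))
      = (n : ℝ) ^ 2 * (Nat.factorial n : ℝ) + ((n : ℝ) + 1) * SK n + 2 * SC n := by
  have hz : ∀ e : Equiv.Perm (Fin n),
      (pexc (Equiv.Perm.decomposeFin.symm ((0 : Fin (n+1)), e)) : ℝ) = (n:ℝ) + k2r e := by
    intro e
    rw [pexc_cast, Equiv.Perm.decomposeFin_symm_apply_zero, if_pos rfl, c2_hat, c1r_zero', k2r]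
    ring
  have hs : ∀ (e : Equiv.Perm (Fin n)) (q : Fin n),
      (pexc (Equiv.Perm.decomposeFin.symm (q.succ, e)) : ℝ)
        = ((n:ℝ) - 1 + k2r e) + 2 * (if e q = q then (1:ℝ) else 0) := by
    intro e q
    rw [pexc_cast, Equiv.Perm.decomposeFin_symm_apply_zero, if_neg (Fin.succ_ne_zero q),
      c2_succ, c1r_succ', k2r]
    push_cast
    by_cases h : e q = q <;> simp [h] <;> ring
  rw [sum_perm_succ]
  have inner : ∀ e : Equiv.Perm (Fin n),
      (∑ q : Fin n, (pexc (Equiv.Perm.decomposeFin.symm (q.succ, e)) : ℝ))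
        = (n:ℝ) * ((n:ℝ) - 1 + k2r e) + 2 * c1r e := by
    intro e
    rw [Finset.sum_congr rfl fun q _ => hs e q, sum_ind]
  rw [Finset.sum_congr rfl fun e _ => inner e, ← Finset.sum_add_distrib]
  have expand : ∀ e : Equiv.Perm (Fin n),
      (pexc (Equiv.Perm.decomposeFin.symm ((0 : Fin (n+1)), e)) : ℝ)
          + ((n:ℝ) * ((n:ℝ) - 1 + k2r e) + 2 * c1r e)
        = 0 * (k2r e)^2 + 0 * (c1r e * k2r e) + 0 * (c1r e)^2 + 2 * c1r e
          + ((n:ℝ) + 1) * k2r e + (n:ℝ)^2 := by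
    intro e
    rw [hz]
    ring
  rw [Finset.sum_congr rfl fun e _ => expand e, moment_sum]
  ring

lemma sumB (n : ℕ) :
    (∑ π : Equiv.Perm (Fin (n+1)), (pexc π : ℝ) ^ 2)
      = (n : ℝ) * ((n : ℝ) ^ 2 - (n : ℝ) + 1) * (Nat.factorial n : ℝ)
        + 2 * (n : ℝ) ^ 2 * SK n + ((n : ℝ) + 1) * SK2 n + 4 * (n : ℝ) * SC n + 4 * SP n := by
  have hz : ∀ e : Equiv.Perm (Fin n),
      (pexc (Equiv.Perm.decomposeFin.symm ((0 : Fin (n+1)), e)) : ℝ) = (n:ℝ) + k2r e := by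
    intro e
    rw [pexc_cast, Equiv.Perm.decomposeFin_symm_apply_zero, if_pos rfl, c2_hat, c1r_zero', k2r]
    ring
  have hs : ∀ (e : Equiv.Perm (Fin n)) (q : Fin n),
      (pexc (Equiv.Perm.decomposeFin.symm (q.succ, e)) : ℝ)
        = ((n:ℝ) - 1 + k2r e) + 2 * (if e q = q then (1:ℝ) else 0) := by
    intro e q
    rw [pexc_cast, Equiv.Perm.decomposeFin_symm_apply_zero, if_neg (Fin.succ_ne_zero q),
      c2_succ, c1r_succ', k2r]
    push_cast
    by_cases h : e q = q <;> simp [h] <;> ring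
  rw [sum_perm_succ]
  have inner : ∀ e : Equiv.Perm (Fin n),
      (∑ q : Fin n, (pexc (Equiv.Perm.decomposeFin.symm (q.succ, e)) : ℝ) ^ 2)
        = (n:ℝ) * ((n:ℝ) - 1 + k2r e)^2 + (4 * ((n:ℝ) - 1 + k2r e) + 4) * c1r e := by
    intro e
    have hq : ∀ q : Fin n, (pexc (Equiv.Perm.decomposeFin.symm (q.succ, e)) : ℝ) ^ 2
        = ((n:ℝ) - 1 + k2r e)^2
          + (4 * ((n:ℝ) - 1 + k2r e) + 4) * (if e q = q then (1:ℝ) else 0) := by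
      intro q
      rw [hs e q]
      by_cases h : e q = q <;> simp [h] <;> ring
    rw [Finset.sum_congr rfl fun q _ => hq q, sum_ind]
  rw [Finset.sum_congr rfl fun e _ => inner e, ← Finset.sum_add_distrib]
  have expand : ∀ e : Equiv.Perm (Fin n),
      (pexc (Equiv.Perm.decomposeFin.symm ((0 : Fin (n+1)), e)) : ℝ) ^ 2
          + ((n:ℝ) * ((n:ℝ) - 1 + k2r e)^2 + (4 * ((n:ℝ) - 1 + k2r e) + 4) * c1r e)
        = ((n:ℝ) + 1) * (k2r e)^2 + 4 * (c1r e * k2r e) + 0 * (c1r e)^2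
          + (4 * (n:ℝ)) * c1r e + (2 * (n:ℝ)^2) * k2r e
          + ((n:ℝ)^2 + (n:ℝ) * ((n:ℝ) - 1)^2) := by
    intro e
    rw [hz]
    ring
  rw [Finset.sum_congr rfl fun e _ => expand e, moment_sum]
  ring

/-! ### Base values at n = 1 -/

lemma sum_perm_one (f : Equiv.Perm (Fin 1) → ℝ) : (∑ π : Equiv.Perm (Fin 1), f π) = f 1 := by
  have h : ∀ π : Equiv.Perm (Fin 1), π = 1 := fun π => Equiv.ext fun i => Subsingleton.elim _ _
  have huniv : (Finset.univ : Finset (Equiv.Perm (Fin 1))) = {1} :=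
    Finset.eq_singleton_iff_unique_mem.2 ⟨Finset.mem_univ _, fun x _ => h x⟩
  rw [huniv, Finset.sum_singleton]

lemma c1r_one : c1r (1 : Equiv.Perm (Fin 1)) = 1 := by simp [c1r]

lemma k2r_one : k2r (1 : Equiv.Perm (Fin 1)) = -1 := by
  simp [k2r, c2, Equiv.Perm.cycleType_one, c1r_one]

lemma SC_one : SC 1 = 1 := by rw [SC, sum_perm_one, c1r_one]
lemma SC2_one : SC2 1 = 1 := by rw [SC2, sum_perm_one, c1r_one]; norm_num
lemma SK_one : SK 1 = -1 := by rw [SK, sum_perm_one, k2r_one]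
lemma SK2_one : SK2 1 = 1 := by rw [SK2, sum_perm_one, k2r_one]; norm_num
lemma SP_one : SP 1 = -1 := by rw [SP, sum_perm_one, k2r_one, c1r_one]; norm_num

/-! ### Harmonic recurrences -/

lemma H_succ (n : ℕ) : H (n+1) = H n + 1 / ((n : ℝ) + 1) := by
  rw [H, H, Finset.sum_Icc_succ_top (by omega : 1 ≤ n + 1)]
  push_cast; ring

lemma T_succ (n : ℕ) : T (n+1) = T n + 1 / ((n : ℝ) + 1) ^ 2 := by
  rw [T, T, Finset.sum_Icc_succ_top (by omega : 1 ≤ n + 1)]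
  push_cast; ring

/-! ### Closed forms -/

lemma SC_closed : ∀ n, 1 ≤ n → SC n = (Nat.factorial n : ℝ) := by
  intro n hn
  induction n, hn using Nat.le_induction with
  | base => rw [SC_one]; norm_num
  | succ n hn ih =>
    rw [SC_rec, ih, Nat.factorial_succ]
    push_cast
    ring

lemma SC2_closed : ∀ n, 2 ≤ n → SC2 n = 2 * (Nat.factorial n : ℝ) := by
  intro n hn
  induction n, hn using Nat.le_induction with
  | base =>
    rw [show (2:ℕ) = 1 + 1 from rfl, SC2_rec, SC2_one, SC_one]
    norm_num [Nat.factorial]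
  | succ n hn ih =>
    rw [SC2_rec, ih, SC_closed n (by omega), Nat.factorial_succ]
    push_cast
    ring

lemma SK_closed : ∀ n, 1 ≤ n → SK n = (H n - 2) * (Nat.factorial n : ℝ) := by
  intro n hn
  induction n, hn using Nat.le_induction with
  | base =>
    rw [SK_one]
    norm_num [H, Nat.factorial]
  | succ n hn ih =>
    rw [SK_rec, ih, SC_closed n hn, H_succ, Nat.factorial_succ]
    have h1 : (n:ℝ) + 1 ≠ 0 := by positivity
    push_cast
    field_simp
    ring

lemma SP_closed : ∀ n, 2 ≤ n → SP n = (H n - 3 - 1 / (n : ℝ)) * (Nat.factorial n : ℝ) := by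
  intro n hn
  induction n, hn using Nat.le_induction with
  | base =>
    show SP (1+1) = (H (1+1) - 3 - 1 / ((1+1:ℕ):ℝ)) * ((Nat.factorial (1+1) : ℕ) : ℝ)
    rw [SP_rec, SP_one, SK_one, SC2_one, SC_one, H_succ]
    norm_num [H, Nat.factorial]
  | succ n hn ih =>
    rw [SP_rec, ih, SK_closed n (by omega), SC2_closed n hn, SC_closed n (by omega),
      H_succ, Nat.factorial_succ]
    have h1 : (n:ℝ) + 1 ≠ 0 := by positivity
    have h2 : (n:ℝ) ≠ 0 := by positivity
    push_cast
    field_simp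
    ring

lemma SK2_closed : ∀ n, 2 ≤ n →
    SK2 n = (H n - T n + 4 / (n : ℝ) + (H n - 2) ^ 2) * (Nat.factorial n : ℝ) := by
  intro n hn
  induction n, hn using Nat.le_induction with
  | base =>
    have h := SK2_rec 1
    rw [SK2_one, SP_one, SC_one, SK_one] at h
    norm_num [Nat.factorial] at h
    have hH1 : H 1 = 1 := by norm_num [H]
    have hT1 : T 1 = 1 := by norm_num [T]
    have hH := H_succ 1
    have hT := T_succ 1
    rw [hH1] at hH
    rw [hT1] at hT
    norm_num at hH hT
    rw [h, hH, hT]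
    norm_num [Nat.factorial]
  | succ n hn ih =>
    rw [SK2_rec, ih, SP_closed n hn, SC_closed n (by omega), SK_closed n (by omega),
      H_succ, T_succ, Nat.factorial_succ]
    have h1 : (n:ℝ) + 1 ≠ 0 := by positivity
    have h2 : (n:ℝ) ≠ 0 := by positivity
    push_cast
    field_simp
    ring

end PexcAux

open PexcAux in
theorem stmt12 (n : ℕ) (hn : 2 ≤ n) :
    (∑ π : Equiv.Perm (Fin n), (pexc π : ℝ) ^ 2) / (Nat.factorial n : ℝ)
      - ((∑ π : Equiv.Perm (Fin n), (pexc π : ℝ)) / (Nat.factorial n : ℝ)) ^ 2 =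
      H n + 4 / n - 8 / (n : ℝ) ^ 2 - ∑ j ∈ Finset.Icc 1 n, 1 / (j : ℝ) ^ 2 := by
  obtain ⟨m, rfl⟩ : ∃ m, n = m + 1 := ⟨n - 1, by omega⟩
  have hm : 1 ≤ m := by omega
  have hT : (∑ j ∈ Finset.Icc 1 (m+1), 1 / (j : ℝ) ^ 2) = T (m+1) := rfl
  have hfac : ((m+1).factorial : ℝ) = ((m:ℝ) + 1) * (m.factorial : ℝ) := by
    rw [Nat.factorial_succ]; push_cast; ring
  have hfne : (m.factorial : ℝ) ≠ 0 := by positivity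
  have hm1 : (m:ℝ) + 1 ≠ 0 := by positivity
  rw [sumA, sumB, hT, H_succ, T_succ, hfac]
  rcases eq_or_lt_of_le hm with h1 | h2
  · rw [← h1, SK_one, SK2_one, SC_one, SP_one]
    norm_num [H, T, Nat.factorial]
  · have hm2 : 2 ≤ m := h2
    have hm0 : (m:ℝ) ≠ 0 := by positivity
    rw [SK_closed m hm, SK2_closed m hm2, SC_closed m hm, SP_closed m hm2]
    field_simp
    push_cast
    ring
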